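/- Let n ≥ 1 and let Σ be a real symmetric positive definite n×n matrix. The linear operator S_Σ : 𝕊_n → 𝕊_n defined by S_Σ(σ) := Σ⁻¹σΣ⁻¹ + (1/2) Tr(Σ⁻¹σ) Σ⁻¹ is self-adjoint with respect to the Frobenius inner product, and it is positive definite: for every σ ∈ 𝕊_n, ⟨σ, S_Σ(σ)⟩ ≥ Tr((Σ^{−1/2} σ Σ^{−1/2})²), and this quantity is strictly positive whenever σ ≠ 0. Consequently S_Σ is a bijection on 𝕊_n. -/

import Mathlib

open Matrix

noncomputable section

/-- The operator `S_Σ(σ) := Σ⁻¹ σ Σ⁻¹ + (1/2) Tr(Σ⁻¹σ) Σ⁻¹` on real `n×n` matrices. -/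
def opS {n : ℕ} (Sg : Matrix (Fin n) (Fin n) ℝ) (sig : Matrix (Fin n) (Fin n) ℝ) :
    Matrix (Fin n) (Fin n) ℝ :=
  Sg⁻¹ * sig * Sg⁻¹ + ((1/2 : ℝ) * (Sg⁻¹ * sig).trace) • Sg⁻¹

/-- The square root of a positive semidefinite matrix, as `Matrix.PosSemidef.sqrt` was defined
in older Mathlib (removed since). -/
def Matrix.PosSemidef.sqrt {m : Type*} [Fintype m] [DecidableEq m] {𝕜 : Type*} [RCLike 𝕜] [PartialOrder 𝕜]
    {A : Matrix m m 𝕜} (hA : A.PosSemidef) : Matrix m m 𝕜 :=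
  (hA.isHermitian.eigenvectorUnitary : Matrix m m 𝕜) *
    diagonal (fun i => ((√(hA.isHermitian.eigenvalues i) : ℝ) : 𝕜)) *
    (star hA.isHermitian.eigenvectorUnitary : Matrix m m 𝕜)

lemma psd_sqrt_mul_self {n : ℕ} {A : Matrix (Fin n) (Fin n) ℝ} (hA : A.PosSemidef) :
    hA.sqrt * hA.sqrt = A := by
  have hU := Unitary.coe_star_mul_self hA.isHermitian.eigenvectorUnitary
  have hd : diagonal (fun i => ((√(hA.isHermitian.eigenvalues i) : ℝ) : ℝ)) *
      diagonal (fun i => ((√(hA.isHermitian.eigenvalues i) : ℝ) : ℝ))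
      = diagonal (RCLike.ofReal ∘ hA.isHermitian.eigenvalues) := by
    rw [Matrix.diagonal_mul_diagonal]
    congr 1
    funext i
    simp [Real.mul_self_sqrt (hA.eigenvalues_nonneg i)]
  conv_rhs => rw [hA.isHermitian.spectral_theorem, Unitary.conjStarAlgAut_apply]
  rw [Matrix.PosSemidef.sqrt, ← hd]
  simp only [Matrix.mul_assoc]
  rw [← Matrix.mul_assoc (star _ : Matrix (Fin n) (Fin n) ℝ) _ _, hU, Matrix.one_mul]
  rfl

lemma psd_sqrt_conjTranspose {n : ℕ} {A : Matrix (Fin n) (Fin n) ℝ} (hA : A.PosSemidef) :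
    (hA.sqrt)ᴴ = hA.sqrt := by
  simp [Matrix.PosSemidef.sqrt, Matrix.conjTranspose_mul, Matrix.star_eq_conjTranspose,
    Matrix.diagonal_conjTranspose, Matrix.mul_assoc]

lemma trace_sq_pos_of_ne_zero {n : ℕ} {M : Matrix (Fin n) (Fin n) ℝ}
    (hM : M.IsSymm) (h : M ≠ 0) : 0 < (M ^ 2).trace := by
  have hMM : M ^ 2 = M * Mᵀ := by rw [pow_two, hM.eq]
  have htr : (M ^ 2).trace = ∑ i, ∑ j, (M i j) ^ 2 := by
    rw [hMM]
    simp [Matrix.trace, Matrix.diag, Matrix.mul_apply, pow_two]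
  rw [htr]
  obtain ⟨i, j, hij⟩ : ∃ i j, M i j ≠ 0 := by
    by_contra hc
    push_neg at hc
    exact h (by ext i j; simp [hc])
  apply Finset.sum_pos' (fun i _ => Finset.sum_nonneg fun j _ => sq_nonneg _)
  exact ⟨i, Finset.mem_univ i,
    Finset.sum_pos' (fun j _ => sq_nonneg _) ⟨j, Finset.mem_univ j, by positivity⟩⟩

/-- `S_Σ` maps symmetric matrices to symmetric matrices, is self-adjoint for the
Frobenius inner product `⟨σ₁,σ₂⟩ = Tr(σ₁σ₂)`, is positive definite:
`⟨σ, S_Σ(σ)⟩ ≥ Tr((Σ^{−1/2} σ Σ^{−1/2})²)`, with the latter strictly positive for `σ ≠ 0`;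
consequently `S_Σ` is a bijection on the space of real symmetric matrices. -/
theorem stmt4 {n : ℕ} (hn : 1 ≤ n) (Sg : Matrix (Fin n) (Fin n) ℝ)
    (hsymm : Sg.IsSymm) (hpos : Sg.PosDef) :
    (∀ sig : Matrix (Fin n) (Fin n) ℝ, sig.IsSymm → (opS Sg sig).IsSymm) ∧
    (∀ sig1 sig2 : Matrix (Fin n) (Fin n) ℝ, sig1.IsSymm → sig2.IsSymm →
      (sig1 * opS Sg sig2).trace = (opS Sg sig1 * sig2).trace) ∧
    (∀ sig : Matrix (Fin n) (Fin n) ℝ, sig.IsSymm →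
      (sig * opS Sg sig).trace ≥ ((hpos.posSemidef.sqrt⁻¹ * sig * hpos.posSemidef.sqrt⁻¹) ^ 2).trace) ∧
    (∀ sig : Matrix (Fin n) (Fin n) ℝ, sig.IsSymm → sig ≠ 0 →
      0 < ((hpos.posSemidef.sqrt⁻¹ * sig * hpos.posSemidef.sqrt⁻¹) ^ 2).trace) ∧
    ∀ tau : Matrix (Fin n) (Fin n) ℝ, tau.IsSymm →
      ∃! sig : Matrix (Fin n) (Fin n) ℝ, sig.IsSymm ∧ opS Sg sig = tau := by
  set B := Sg⁻¹ with hBdef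
  set Q := hpos.posSemidef.sqrt with hQdef
  set R := Q⁻¹ with hRdef
  -- basic facts
  have hBsymm : B.IsSymm := by
    rw [Matrix.IsSymm, hBdef, Matrix.transpose_nonsing_inv, hsymm.eq]
  have hQQ : Q * Q = Sg := psd_sqrt_mul_self hpos.posSemidef
  have hQsymm : Q.IsSymm := by
    rw [Matrix.IsSymm, ← Matrix.conjTranspose_eq_transpose_of_trivial]
    exact psd_sqrt_conjTranspose hpos.posSemidef
  have hRsymm : R.IsSymm := by
    rw [Matrix.IsSymm, hRdef, Matrix.transpose_nonsing_inv, hQsymm.eq]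
  have hdetSg : IsUnit Sg.det := isUnit_iff_ne_zero.2 hpos.det_pos.ne'
  have hdetQ : IsUnit Q.det := by
    have h : Q.det * Q.det = Sg.det := by rw [← Matrix.det_mul, hQQ]
    exact isUnit_iff_ne_zero.2 fun h0 => hpos.det_pos.ne' (by rw [← h, h0, mul_zero])
  have hRR : R * R = B := by
    rw [hRdef, ← Matrix.mul_inv_rev, hQQ]
  -- part 1: symmetry preservation
  have part1 : ∀ sig : Matrix (Fin n) (Fin n) ℝ, sig.IsSymm → (opS Sg sig).IsSymm := by
    intro sig hs
    rw [Matrix.IsSymm, opS, Matrix.transpose_add, Matrix.transpose_smul,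
      Matrix.transpose_mul, Matrix.transpose_mul, hBsymm.eq, hs.eq, Matrix.mul_assoc]
  -- part 2: self-adjointness
  have part2 : ∀ sig1 sig2 : Matrix (Fin n) (Fin n) ℝ, sig1.IsSymm → sig2.IsSymm →
      (sig1 * opS Sg sig2).trace = (opS Sg sig1 * sig2).trace := by
    intro s1 s2 _ _
    simp only [opS, ← hBdef]
    rw [ Matrix.mul_add, Matrix.add_mul, Matrix.trace_add, Matrix.trace_add]
    congr 1
    · rw [Matrix.trace_mul_comm s1 (B * s2 * B),
        show B * s2 * B * s1 = (B * s2) * (B * s1) by noncomm_ring,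
        Matrix.trace_mul_comm (B * s2) (B * s1)]
      congr 1
      noncomm_ring
    · rw [Matrix.mul_smul, Matrix.smul_mul, Matrix.trace_smul, Matrix.trace_smul,
        smul_eq_mul, smul_eq_mul, Matrix.trace_mul_comm s1 B]
      ring
  -- key trace identity
  have key : ∀ sig : Matrix (Fin n) (Fin n) ℝ,
      (sig * opS Sg sig).trace
        = ((R * sig * R) ^ 2).trace + (1/2 : ℝ) * ((B * sig).trace) ^ 2 := by
    intro s
    have h1 : ((R * s * R) ^ 2).trace = (s * (B * s * B)).trace := by
      rw [pow_two,
        show R * s * R * (R * s * R) = R * (s * (R * R) * s * R) by noncomm_ring,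
        Matrix.trace_mul_comm R (s * (R * R) * s * R),
        show s * (R * R) * s * R * R = s * ((R * R) * s * (R * R)) by noncomm_ring, hRR]
    simp only [opS, ← hBdef]
    rw [Matrix.mul_add, Matrix.trace_add, h1, Matrix.mul_smul, Matrix.trace_smul,
      smul_eq_mul, Matrix.trace_mul_comm s B]
    ring
  -- part 3
  have part3 : ∀ sig : Matrix (Fin n) (Fin n) ℝ, sig.IsSymm →
      (sig * opS Sg sig).trace ≥ ((R * sig * R) ^ 2).trace := by
    intro s _
    rw [key s]
    nlinarith [sq_nonneg ((B * s).trace)]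
  -- part 4
  have part4 : ∀ sig : Matrix (Fin n) (Fin n) ℝ, sig.IsSymm → sig ≠ 0 →
      0 < ((R * sig * R) ^ 2).trace := by
    intro s hs hne
    have hMsymm : (R * s * R).IsSymm := by
      rw [Matrix.IsSymm, Matrix.transpose_mul, Matrix.transpose_mul, hRsymm.eq, hs.eq,
        Matrix.mul_assoc]
    apply trace_sq_pos_of_ne_zero hMsymm
    intro hM0
    apply hne
    have : Q * (R * s * R) * Q = s := by
      rw [hRdef, Matrix.mul_assoc, Matrix.mul_assoc, Matrix.nonsing_inv_mul _ hdetQ,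
        Matrix.mul_one, ← Matrix.mul_assoc, Matrix.mul_nonsing_inv _ hdetQ, Matrix.one_mul]
    rw [← this, hM0, Matrix.mul_zero, Matrix.zero_mul]
  refine ⟨part1, part2, part3, part4, ?_⟩
  -- part 5: bijectivity
  set Sym : Submodule ℝ (Matrix (Fin n) (Fin n) ℝ) :=
    { carrier := {A | A.IsSymm}
      add_mem' := fun {a b} ha hb => by
        simpa [Matrix.IsSymm, Matrix.transpose_add] using congrArg₂ (· + ·) ha hb
      zero_mem' := by simp [Matrix.IsSymm]
      smul_mem' := fun c a ha => by
        simpa [Matrix.IsSymm, Matrix.transpose_smul] using congrArg (c • ·) ha } with hSymDef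
  have memSym : ∀ A : Matrix (Fin n) (Fin n) ℝ, A ∈ Sym ↔ A.IsSymm := fun A => Iff.rfl
  have hlin_add : ∀ a b : Matrix (Fin n) (Fin n) ℝ, opS Sg (a + b) = opS Sg a + opS Sg b := by
    intro a b
    simp only [opS, Matrix.mul_add, Matrix.add_mul, Matrix.trace_add, mul_add, add_smul]
    abel
  have hlin_smul : ∀ (c : ℝ) (a : Matrix (Fin n) (Fin n) ℝ),
      opS Sg (c • a) = c • opS Sg a := by
    intro c a
    simp only [opS, Matrix.mul_smul, Matrix.smul_mul, Matrix.trace_smul, smul_eq_mul,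
      smul_add, smul_smul]
    ring_nf
  set L : Sym →ₗ[ℝ] Sym :=
    { toFun := fun s => ⟨opS Sg s.1, part1 s.1 s.2⟩
      map_add' := fun a b => Subtype.ext (hlin_add a.1 b.1)
      map_smul' := fun c a => Subtype.ext (hlin_smul c a.1) } with hLdef
  have hLinj : Function.Injective L := by
    rw [← LinearMap.ker_eq_bot, Submodule.eq_bot_iff]
    rintro ⟨s, hs⟩ hker
    have h0 : opS Sg s = 0 := congrArg Subtype.val hker
    ext : 1
    by_contra hne
    have h4 := part4 s hs hne
    have h3 := part3 s hs
    rw [h0, Matrix.mul_zero, Matrix.trace_zero] at h3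
    linarith
  have hLsurj : Function.Surjective L := LinearMap.injective_iff_surjective.mp hLinj
  intro tau htau
  obtain ⟨⟨s, hs⟩, hLs⟩ := hLsurj ⟨tau, htau⟩
  refine ⟨s, ⟨hs, congrArg Subtype.val hLs⟩, ?_⟩
  rintro s' ⟨hs', hEq⟩
  have h1 : opS Sg s = tau := congrArg Subtype.val hLs
  have : L ⟨s', hs'⟩ = L ⟨s, hs⟩ := by
    apply Subtype.ext
    show opS Sg s' = opS Sg s
    rw [hEq, h1]
  exact congrArg Subtype.val (hLinj this)
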